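/- Multiplication of coalesced temporal K-elements distributes over their addition: for all coalesced temporal K-elements k, k', k'' we have k ·_T (k' +_T k'') = (k ·_T k') +_T (k ·_T k''). -/
import Mathlib


open scoped Classical

namespace TemporalK

variable {K : Type*}

/-- An interval over the time domain `{0, ..., N-1}`: a pair `(b, e)` with `b < e ≤ N`. -/
abbrev TInterval (N : ℕ) := {I : Fin (N + 1) × Fin (N + 1) // I.1 < I.2}

/-- A temporal `K`-element: a function assigning to each interval an element of `K`. -/
abbrev TempEl (N : ℕ) (K : Type*) := TInterval N → K

/-- The interval `I = (b, e)` contains the time point `T` iff `b ≤ T < e`. -/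
def Contains {N : ℕ} (I : TInterval N) (T : ℕ) : Prop :=
  (I.val.1 : ℕ) ≤ T ∧ T < (I.val.2 : ℕ)

/-- The timeslice of `𝒯` at time point `T`: the sum of `𝒯 I` over all intervals `I`
containing `T`. -/
noncomputable def slice {N : ℕ} [CommSemiring K] (𝒯 : TempEl N K) (T : ℕ) : K :=
  ∑ I ∈ Finset.univ.filter (fun I : TInterval N => Contains I T), 𝒯 I

/-- `T` is an (annotation) changepoint of `𝒯` iff `T = 0` or the timeslices at `T - 1`
and `T` differ. -/
def Changepoint {N : ℕ} [CommSemiring K] (𝒯 : TempEl N K) (T : ℕ) : Prop :=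
  T = 0 ∨ slice 𝒯 (T - 1) ≠ slice 𝒯 T

/-- `I = (b, e)` is a changepoint interval of `𝒯` iff `b` is a changepoint, `e` is a
changepoint or equals `N`, and no time point strictly between `b` and `e` is a changepoint. -/
def CPInterval {N : ℕ} [CommSemiring K] (𝒯 : TempEl N K) (I : TInterval N) : Prop :=
  Changepoint 𝒯 (I.val.1 : ℕ) ∧
    (Changepoint 𝒯 (I.val.2 : ℕ) ∨ (I.val.2 : ℕ) = N) ∧
    ∀ T : ℕ, (I.val.1 : ℕ) < T → T < (I.val.2 : ℕ) → ¬ Changepoint 𝒯 T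

/-- `K`-coalescing: maps changepoint intervals `(b, e)` to the timeslice at `b` and all
other intervals to `0`. -/
noncomputable def coal {N : ℕ} [CommSemiring K] (𝒯 : TempEl N K) : TempEl N K :=
  fun I => if CPInterval 𝒯 I then slice 𝒯 (I.val.1 : ℕ) else 0

/-- Snapshot equivalence: equal timeslices at every time point. -/
def SnapEq {N : ℕ} [CommSemiring K] (k k' : TempEl N K) : Prop :=
  ∀ T : ℕ, T < N → slice k T = slice k' T

/-- A temporal `K`-element is coalesced iff it is the `K`-coalescing of some
temporal `K`-element. -/
def Coalesced {N : ℕ} [CommSemiring K] (k : TempEl N K) : Prop :=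
  ∃ 𝒯 : TempEl N K, k = coal 𝒯

/-- Pointwise addition of temporal `K`-elements. -/
def padd {N : ℕ} [CommSemiring K] (k k' : TempEl N K) : TempEl N K :=
  fun I => k I + k' I

/-- Pointwise multiplication of temporal `K`-elements:
`(k ·_P k')(I) = Σ k(I')·k'(I'')` over all pairs `(I', I'')` whose intersection is
nonempty and equals `I`. -/
noncomputable def pmul {N : ℕ} [CommSemiring K] (k k' : TempEl N K) : TempEl N K :=
  fun I =>
    ∑ p ∈ Finset.univ.filter (fun p : TInterval N × TInterval N =>
        max (p.1.val.1 : ℕ) (p.2.val.1 : ℕ) < min (p.1.val.2 : ℕ) (p.2.val.2 : ℕ) ∧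
        (I.val.1 : ℕ) = max (p.1.val.1 : ℕ) (p.2.val.1 : ℕ) ∧
        (I.val.2 : ℕ) = min (p.1.val.2 : ℕ) (p.2.val.2 : ℕ)),
      k p.1 * k' p.2

/-- Addition of the period semiring: coalesced pointwise addition. -/
noncomputable def tadd {N : ℕ} [CommSemiring K] (k k' : TempEl N K) : TempEl N K :=
  coal (padd k k')

/-- Multiplication of the period semiring: coalesced pointwise multiplication. -/
noncomputable def tmul {N : ℕ} [CommSemiring K] (k k' : TempEl N K) : TempEl N K :=
  coal (pmul k k')

/-- The zero of the period semiring: maps every interval to `0`. -/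
def zeroT (N : ℕ) (K : Type*) [CommSemiring K] : TempEl N K := fun _ => 0

/-- The one of the period semiring: maps the interval `(0, N)` to `1` and every other
interval to `0`. -/
def oneT (N : ℕ) (K : Type*) [CommSemiring K] : TempEl N K :=
  fun I => if (I.val.1 : ℕ) = 0 ∧ (I.val.2 : ℕ) = N then 1 else 0

/-- Encoding of an annotation history `f : time points → K` as a coalesced temporal
`K`-element: coalesce the element assigning `f T` to each singleton interval `(T, T+1)`. -/
noncomputable def enc {N : ℕ} [CommSemiring K] (f : Fin N → K) : TempEl N K :=
  coal (fun I =>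
    if h : (I.val.2 : ℕ) = (I.val.1 : ℕ) + 1 then
      f ⟨(I.val.1 : ℕ), by have := I.val.2.isLt; omega⟩
    else 0)

/-- The natural preorder of the semiring `K`. -/
def nle [CommSemiring K] (a b : K) : Prop := ∃ c, a + c = b

/-- The natural preorder of the period semiring (on coalesced temporal `K`-elements). -/
def tle {N : ℕ} [CommSemiring K] (k k' : TempEl N K) : Prop :=
  ∃ k'' : TempEl N K, Coalesced k'' ∧ tadd k k'' = k'

/-- The pointwise monus: assigns `τ_T(k) −_K τ_T(k')` to each singleton interval
`(T, T+1)` and `0` to every non-singleton interval. -/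
noncomputable def pmonus {N : ℕ} [CommSemiring K] (monus : K → K → K)
    (k k' : TempEl N K) : TempEl N K :=
  fun I =>
    if (I.val.2 : ℕ) = (I.val.1 : ℕ) + 1 then
      monus (slice k (I.val.1 : ℕ)) (slice k' (I.val.1 : ℕ))
    else 0

/-- The monus of the period semiring: coalesced pointwise monus. -/
noncomputable def tmonus {N : ℕ} [CommSemiring K] (monus : K → K → K)
    (k k' : TempEl N K) : TempEl N K :=
  coal (pmonus monus k k')

end TemporalK

open TemporalK

namespace TemporalK
section Aux

variable {N : ℕ} {K : Type*} [CommSemiring K]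

lemma not_contains_N (I : TInterval N) : ¬ Contains I N := by
  rintro ⟨h1, h2⟩
  have h3 : (I.val.2 : ℕ) < N + 1 := I.val.2.isLt
  omega

lemma slice_N (k : TempEl N K) : slice k N = 0 := by
  unfold slice
  rw [Finset.filter_false_of_mem (fun I _ => not_contains_N I), Finset.sum_empty]

lemma slice_eq_of_snapEq {k k' : TempEl N K} (h : SnapEq k k') :
    ∀ T, T ≤ N → slice k T = slice k' T := by
  intro T hT
  rcases lt_or_eq_of_le hT with h1 | h1
  · exact h T h1
  · subst h1; rw [slice_N, slice_N]

lemma changepoint_congr {k k' : TempEl N K} (h : SnapEq k k') {T : ℕ} (hT : T ≤ N) :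
    Changepoint k T ↔ Changepoint k' T := by
  unfold Changepoint
  rw [slice_eq_of_snapEq h T hT, slice_eq_of_snapEq h (T - 1) (by omega)]

lemma coal_congr {k k' : TempEl N K} (h : SnapEq k k') : coal k = coal k' := by
  funext I
  have hb : (I.val.1 : ℕ) ≤ N := by have := I.val.1.isLt; omega
  have he : (I.val.2 : ℕ) ≤ N := by have := I.val.2.isLt; omega
  have hcp : CPInterval k I ↔ CPInterval k' I := by
    unfold CPInterval
    rw [changepoint_congr h hb, changepoint_congr h he]
    constructor <;> rintro ⟨h1, h2, h3⟩ <;> refine ⟨h1, h2, fun T h4 h5 hc => h3 T h4 h5 ?_⟩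
    · exact (changepoint_congr h (by omega)).mpr hc
    · exact (changepoint_congr h (by omega)).mp hc
  unfold coal
  rw [if_congr hcp (slice_eq_of_snapEq h _ hb) rfl]

lemma slice_padd (k k' : TempEl N K) (T : ℕ) :
    slice (padd k k') T = slice k T + slice k' T := by
  unfold slice padd
  rw [Finset.sum_add_distrib]

lemma cp_zero (𝒯 : TempEl N K) : Changepoint 𝒯 0 := Or.inl rfl

lemma cpinterval_unique (𝒯 : TempEl N K) {I J : TInterval N} {T : ℕ}
    (hI : CPInterval 𝒯 I) (hJ : CPInterval 𝒯 J) (hIT : Contains I T) (hJT : Contains J T) :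
    I = J := by
  obtain ⟨hI1, hI2, hI3⟩ := hI
  obtain ⟨hJ1, hJ2, hJ3⟩ := hJ
  obtain ⟨hITb, hITe⟩ := hIT
  obtain ⟨hJTb, hJTe⟩ := hJT
  have heI : (I.val.2 : ℕ) ≤ N := by have := I.val.2.isLt; omega
  have heJ : (J.val.2 : ℕ) ≤ N := by have := J.val.2.isLt; omega
  have hb : (I.val.1 : ℕ) = (J.val.1 : ℕ) := by
    rcases lt_trichotomy (I.val.1 : ℕ) (J.val.1 : ℕ) with h | h | h
    · exact absurd hJ1 (hI3 _ h (by omega))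
    · exact h
    · exact absurd hI1 (hJ3 _ h (by omega))
  have he : (I.val.2 : ℕ) = (J.val.2 : ℕ) := by
    rcases lt_trichotomy (I.val.2 : ℕ) (J.val.2 : ℕ) with h | h | h
    · rcases hI2 with h2 | h2
      · exact absurd h2 (hJ3 _ (by omega) h)
      · omega
    · exact h
    · rcases hJ2 with h2 | h2
      · exact absurd h2 (hI3 _ (by omega) h)
      · omega
  exact Subtype.ext (Prod.ext (Fin.ext hb) (Fin.ext he))

lemma slice_eq_of_no_cp (𝒯 : TempEl N K) {b T : ℕ} (hbT : b ≤ T)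
    (h : ∀ s, b < s → s ≤ T → ¬ Changepoint 𝒯 s) : slice 𝒯 b = slice 𝒯 T := by
  induction T with
  | zero =>
    have : b = 0 := by omega
    subst this; rfl
  | succ n ih =>
    rcases Nat.lt_or_ge b (n + 1) with hlt | hge
    · have hbn : b ≤ n := by omega
      have h1 : slice 𝒯 b = slice 𝒯 n := ih hbn (fun s hs1 hs2 => h s hs1 (by omega))
      have h2 : ¬ Changepoint 𝒯 (n + 1) := h (n + 1) hlt le_rfl
      unfold Changepoint at h2
      push_neg at h2
      have := h2.2
      simpa [h1] using this
    · have : b = n + 1 := by omega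
      subst this; rfl

lemma exists_cpinterval (𝒯 : TempEl N K) {T : ℕ} (hT : T < N) :
    ∃ I : TInterval N, CPInterval 𝒯 I ∧ Contains I T := by
  set b := Nat.findGreatest (Changepoint 𝒯) T with hbdef
  have hbT : b ≤ T := Nat.findGreatest_le T
  have hbcp : Changepoint 𝒯 b := Nat.findGreatest_spec (Nat.zero_le T) (cp_zero 𝒯)
  have hbmax : ∀ s, b < s → s ≤ T → ¬ Changepoint 𝒯 s := fun s h1 h2 =>
    Nat.findGreatest_is_greatest h1 h2
  have hP : ∃ s, T < s ∧ (Changepoint 𝒯 s ∨ s = N) := ⟨N, hT, Or.inr rfl⟩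
  set e := Nat.find hP with hedef
  have heP : T < e ∧ (Changepoint 𝒯 e ∨ e = N) := Nat.find_spec hP
  have heN : e ≤ N := Nat.find_min' hP ⟨hT, Or.inr rfl⟩
  have hemin : ∀ s, T < s → s < e → ¬ Changepoint 𝒯 s := by
    intro s h1 h2 hc
    exact Nat.find_min hP h2 ⟨h1, Or.inl hc⟩
  have hbN : b < N + 1 := by omega
  have heN' : e < N + 1 := by omega
  have hbe : b < e := by omega
  refine ⟨⟨(⟨b, hbN⟩, ⟨e, heN'⟩), hbe⟩, ⟨?_, ?_, ?_⟩, ?_, ?_⟩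
  · exact hbcp
  · exact heP.2
  · intro s h1 h2
    simp only at h1 h2
    rcases Nat.lt_or_ge T s with hs | hs
    · exact hemin s hs h2
    · exact hbmax s h1 hs
  · exact hbT
  · exact heP.1

lemma slice_coal (𝒯 : TempEl N K) {T : ℕ} (hT : T < N) :
    slice (coal 𝒯) T = slice 𝒯 T := by
  obtain ⟨I0, hI0, hI0T⟩ := exists_cpinterval 𝒯 hT
  unfold slice coal
  rw [Finset.sum_eq_single_of_mem I0
      (Finset.mem_filter.mpr ⟨Finset.mem_univ _, hI0T⟩)]
  · rw [if_pos hI0]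
    exact (slice_eq_of_no_cp 𝒯 hI0T.1
      (fun s hs1 hs2 => hI0.2.2 s hs1 (lt_of_le_of_lt hs2 hI0T.2)))
  · intro J hJ hne
    rw [if_neg]
    intro hcp
    exact hne (cpinterval_unique 𝒯 hcp hI0 (Finset.mem_filter.mp hJ).2 hI0T)

lemma slice_pmul (k k' : TempEl N K) (T : ℕ) :
    slice (pmul k k') T = slice k T * slice k' T := by
  classical
  unfold slice pmul
  set A := Finset.univ.filter (fun I : TInterval N => Contains I T) with hA
  have key : ∀ p : TInterval N × TInterval N,
      (∑ I ∈ A, if (max (p.1.val.1 : ℕ) (p.2.val.1 : ℕ) < min (p.1.val.2 : ℕ) (p.2.val.2 : ℕ) ∧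
        (I.val.1 : ℕ) = max (p.1.val.1 : ℕ) (p.2.val.1 : ℕ) ∧
        (I.val.2 : ℕ) = min (p.1.val.2 : ℕ) (p.2.val.2 : ℕ)) then k p.1 * k' p.2 else 0)
      = if Contains p.1 T ∧ Contains p.2 T then k p.1 * k' p.2 else 0 := by
    intro p
    by_cases h : Contains p.1 T ∧ Contains p.2 T
    · rw [if_pos h]
      obtain ⟨⟨h1, h2⟩, h3, h4⟩ := h
      have hmT : max (p.1.val.1 : ℕ) (p.2.val.1 : ℕ) ≤ T := by omega
      have hTm' : T < min (p.1.val.2 : ℕ) (p.2.val.2 : ℕ) := by omega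
      have hm'N : min (p.1.val.2 : ℕ) (p.2.val.2 : ℕ) < N + 1 := by
        have := p.1.val.2.isLt; omega
      have hmN : max (p.1.val.1 : ℕ) (p.2.val.1 : ℕ) < N + 1 := by omega
      have hlt : max (p.1.val.1 : ℕ) (p.2.val.1 : ℕ) < min (p.1.val.2 : ℕ) (p.2.val.2 : ℕ) := by
        omega
      refine (Finset.sum_eq_single_of_mem
        (⟨(⟨_, hmN⟩, ⟨_, hm'N⟩), Fin.mk_lt_mk.mpr hlt⟩ : TInterval N) ?_ ?_).trans ?_
      · exact Finset.mem_filter.mpr ⟨Finset.mem_univ _, hmT, hTm'⟩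
      · intro J hJ hne
        rw [if_neg]
        rintro ⟨hc1, hc2, hc3⟩
        exact hne (Subtype.ext (Prod.ext (Fin.ext hc2) (Fin.ext hc3)))
      · exact if_pos ⟨hlt, rfl, rfl⟩
    · rw [if_neg h, Finset.sum_eq_zero]
      intro I hI
      rw [if_neg]
      rintro ⟨hc1, hc2, hc3⟩
      have hIT : Contains I T := (Finset.mem_filter.mp hI).2
      obtain ⟨hl, hr⟩ := hIT
      exact h ⟨⟨by omega, by omega⟩, ⟨by omega, by omega⟩⟩
  calc (∑ I ∈ A, ∑ p ∈ Finset.univ.filter (fun p : TInterval N × TInterval N =>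
        max (p.1.val.1 : ℕ) (p.2.val.1 : ℕ) < min (p.1.val.2 : ℕ) (p.2.val.2 : ℕ) ∧
        (I.val.1 : ℕ) = max (p.1.val.1 : ℕ) (p.2.val.1 : ℕ) ∧
        (I.val.2 : ℕ) = min (p.1.val.2 : ℕ) (p.2.val.2 : ℕ)), k p.1 * k' p.2)
      = ∑ I ∈ A, ∑ p ∈ (Finset.univ : Finset (TInterval N × TInterval N)),
          if (max (p.1.val.1 : ℕ) (p.2.val.1 : ℕ) < min (p.1.val.2 : ℕ) (p.2.val.2 : ℕ) ∧
          (I.val.1 : ℕ) = max (p.1.val.1 : ℕ) (p.2.val.1 : ℕ) ∧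
          (I.val.2 : ℕ) = min (p.1.val.2 : ℕ) (p.2.val.2 : ℕ)) then k p.1 * k' p.2 else 0 := by
        refine Finset.sum_congr rfl fun I _ => ?_
        rw [Finset.sum_filter]
    _ = ∑ p ∈ (Finset.univ : Finset (TInterval N × TInterval N)), ∑ I ∈ A,
          if (max (p.1.val.1 : ℕ) (p.2.val.1 : ℕ) < min (p.1.val.2 : ℕ) (p.2.val.2 : ℕ) ∧
          (I.val.1 : ℕ) = max (p.1.val.1 : ℕ) (p.2.val.1 : ℕ) ∧
          (I.val.2 : ℕ) = min (p.1.val.2 : ℕ) (p.2.val.2 : ℕ)) then k p.1 * k' p.2 else 0 :=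
        Finset.sum_comm
    _ = ∑ p ∈ (Finset.univ : Finset (TInterval N × TInterval N)),
          if Contains p.1 T ∧ Contains p.2 T then k p.1 * k' p.2 else 0 :=
        Finset.sum_congr rfl fun p _ => key p
    _ = ∑ p ∈ Finset.univ.filter (fun p : TInterval N × TInterval N =>
          Contains p.1 T ∧ Contains p.2 T), k p.1 * k' p.2 := (Finset.sum_filter _ _).symm
    _ = ∑ p ∈ A ×ˢ A, k p.1 * k' p.2 := by
        refine Finset.sum_congr ?_ fun _ _ => rfl
        rw [hA, ← Finset.filter_product, Finset.univ_product_univ]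
    _ = (∑ I ∈ A, k I) * ∑ I ∈ A, k' I := by
        rw [Finset.sum_mul_sum, Finset.sum_product]

end Aux
end TemporalK

theorem tmul_tadd_distrib {N : ℕ} (hN : 1 ≤ N) {K : Type*} [CommSemiring K]
    (k k' k'' : TempEl N K)
    (hk : Coalesced k) (hk' : Coalesced k') (hk'' : Coalesced k'') :
    tmul k (tadd k' k'') = tadd (tmul k k') (tmul k k'') := by
  unfold tmul tadd
  apply coal_congr
  intro T hT
  rw [slice_pmul, slice_padd, slice_coal _ hT, slice_padd, slice_coal _ hT,
    slice_coal _ hT, slice_pmul, slice_pmul, mul_add]
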